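/- Let k be an algebraically closed field of characteristic 2, let a_1, a_2, a_3 ∈ k be pairwise distinct, and let c_1,c_2,c_3,d_1,d_2,d_3 ∈ k be all nonzero. Let F_a = (a_1+a_2)²(c_3x²y² + d_3z²t²) + (a_1+a_3)²(c_2x²z² + d_2y²t²) + (a_2+a_3)²(c_1x²t² + d_1y²z²) + (a_1+a_2)(a_2+a_3)(a_3+a_1)xyzt ∈ k[x,y,z,t]. Then: (i) the singular points of the quartic surface S = {F_a = 0} in P^3(k) — points represented by nonzero (x,y,z,t) at which F_a and all four partial derivatives ∂F_a/∂x, ∂F_a/∂y, ∂F_a/∂z, ∂F_a/∂t vanish — are exactly the four coordinate points (1:0:0:0), (0:1:0:0), (0:0:1:0), (0:0:0:1); and (ii) letting e_i, f_i ∈ k be the unique square roots of d_i and c_i respectively, each coordinate hyperplane section of S is a double conic: F_a(0,y,z,t) = ((a_1+a_2)e_3zt + (a_1+a_3)e_2yt + (a_2+a_3)e_1yz)², F_a(x,0,z,t) = ((a_1+a_2)e_3zt + (a_1+a_3)f_2xz + (a_2+a_3)f_1xt)², F_a(x,y,0,t) = ((a_1+a_2)f_3xy + (a_1+a_3)e_2yt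 + (a_2+a_3)f_1xt)², F_a(x,y,z,0) = ((a_1+a_2)f_3xy + (a_1+a_3)f_2xz + (a_2+a_3)e_1yz)². -/

import Mathlib

open MvPolynomial

/-- The Kummer quartic polynomial of the ordinary case; coordinates
`(x,y,z,t) = (X 0, X 1, X 2, X 3)`. -/
noncomputable def FaP (k : Type*) [Field k] (a1 a2 a3 c1 c2 c3 d1 d2 d3 : k) :
    MvPolynomial (Fin 4) k :=
  C ((a1+a2)^2) * (C c3 * (X 0 ^ 2 * X 1 ^ 2) + C d3 * (X 2 ^ 2 * X 3 ^ 2))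
    + C ((a1+a3)^2) * (C c2 * (X 0 ^ 2 * X 2 ^ 2) + C d2 * (X 1 ^ 2 * X 3 ^ 2))
    + C ((a2+a3)^2) * (C c1 * (X 0 ^ 2 * X 3 ^ 2) + C d1 * (X 1 ^ 2 * X 2 ^ 2))
    + C ((a1+a2)*(a2+a3)*(a3+a1)) * (X 0 * X 1 * X 2 * X 3)

lemma FaP_eval (k : Type*) [Field k] (a1 a2 a3 c1 c2 c3 d1 d2 d3 : k) (v : Fin 4 → k) :
    eval v (FaP k a1 a2 a3 c1 c2 c3 d1 d2 d3) =
      (a1+a2)^2 * (c3 * (v 0 ^2 * v 1 ^2) + d3 * (v 2^2 * v 3^2))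
      + (a1+a3)^2 * (c2 * (v 0^2 * v 2^2) + d2 * (v 1^2 * v 3^2))
      + (a2+a3)^2 * (c1 * (v 0^2 * v 3^2) + d1 * (v 1^2 * v 2^2))
      + (a1+a2)*(a2+a3)*(a3+a1) * (v 0 * v 1 * v 2 * v 3) := by
  simp [FaP]

lemma FaP_pderiv_eval (k : Type*) [Field k] [CharP k 2]
    (a1 a2 a3 c1 c2 c3 d1 d2 d3 : k) (v : Fin 4 → k) :
    (eval v (pderiv 0 (FaP k a1 a2 a3 c1 c2 c3 d1 d2 d3)) =
      (a1+a2)*(a2+a3)*(a3+a1) * (v 1 * v 2 * v 3)) ∧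
    (eval v (pderiv 1 (FaP k a1 a2 a3 c1 c2 c3 d1 d2 d3)) =
      (a1+a2)*(a2+a3)*(a3+a1) * (v 0 * v 2 * v 3)) ∧
    (eval v (pderiv 2 (FaP k a1 a2 a3 c1 c2 c3 d1 d2 d3)) =
      (a1+a2)*(a2+a3)*(a3+a1) * (v 0 * v 1 * v 3)) ∧
    (eval v (pderiv 3 (FaP k a1 a2 a3 c1 c2 c3 d1 d2 d3)) =
      (a1+a2)*(a2+a3)*(a3+a1) * (v 0 * v 1 * v 2)) := by
  have h2k : (2:k) = 0 := by exact_mod_cast CharP.cast_eq_zero k 2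
  refine ⟨?_, ?_, ?_, ?_⟩ <;> (simp [FaP, pderiv_mul, pderiv_pow, pderiv_X, h2k]; try ring) <;>
    (left; trivial)

set_option maxHeartbeats 1600000 in
lemma FaP_sing (k : Type*) [Field k] [CharP k 2]
    (a1 a2 a3 c1 c2 c3 d1 d2 d3 : k)
    (h12 : a1 ≠ a2) (h13 : a1 ≠ a3) (h23 : a2 ≠ a3)
    (hc1 : c1 ≠ 0) (hc2 : c2 ≠ 0) (hc3 : c3 ≠ 0)
    (hd1 : d1 ≠ 0) (hd2 : d2 ≠ 0) (hd3 : d3 ≠ 0)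
    (v : Fin 4 → k) (hv : v ≠ 0) :
      ((eval v (FaP k a1 a2 a3 c1 c2 c3 d1 d2 d3) = 0 ∧
          ∀ i : Fin 4, eval v (pderiv i (FaP k a1 a2 a3 c1 c2 c3 d1 d2 d3)) = 0)
        ↔ ((v 1 = 0 ∧ v 2 = 0 ∧ v 3 = 0) ∨ (v 0 = 0 ∧ v 2 = 0 ∧ v 3 = 0) ∨
           (v 0 = 0 ∧ v 1 = 0 ∧ v 3 = 0) ∨ (v 0 = 0 ∧ v 1 = 0 ∧ v 2 = 0))) := by
  have h2k : (2:k) = 0 := by exact_mod_cast CharP.cast_eq_zero k 2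
  have hne : ∀ a b : k, a ≠ b → a + b ≠ 0 := by
    intro a b hab h
    exact hab (by linear_combination h - b * h2k)
  have g12 := hne _ _ h12
  have g13 := hne _ _ h13
  have g23 := hne _ _ h23
  have g31 : a3 + a1 ≠ 0 := fun h => g13 (by linear_combination h)
  have hm : (a1+a2)*(a2+a3)*(a3+a1) ≠ 0 := mul_ne_zero (mul_ne_zero g12 g23) g31
  obtain ⟨hp0, hp1, hp2, hp3⟩ := FaP_pderiv_eval k a1 a2 a3 c1 c2 c3 d1 d2 d3 v
  constructor
  · rintro ⟨hF, hD⟩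
    rw [FaP_eval] at hF
    have q0 := hD 0; have q1 := hD 1; have q2 := hD 2; have q3 := hD 3
    rw [hp0] at q0; rw [hp1] at q1; rw [hp2] at q2; rw [hp3] at q3
    replace q0 := (mul_eq_zero.mp q0).resolve_left hm
    replace q1 := (mul_eq_zero.mp q1).resolve_left hm
    replace q2 := (mul_eq_zero.mp q2).resolve_left hm
    replace q3 := (mul_eq_zero.mp q3).resolve_left hm
    clear hD hp0 hp1 hp2 hp3
    by_cases H0 : v 0 = 0
    · by_cases H1 : v 1 = 0
      · by_cases H2 : v 2 = 0
        · exact Or.inr (Or.inr (Or.inr ⟨H0, H1, H2⟩))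
        · have H3 : v 3 = 0 := by
            simp only [H0, H1, ne_eq, OfNat.ofNat_ne_zero, not_false_eq_true, zero_pow,
              mul_zero, zero_mul, add_zero, zero_add, mul_eq_zero, pow_eq_zero_iff] at hF
            tauto
          exact Or.inr (Or.inr (Or.inl ⟨H0, H1, H3⟩))
      · by_cases H2 : v 2 = 0
        · have H3 : v 3 = 0 := by
            simp only [H0, H2, ne_eq, OfNat.ofNat_ne_zero, not_false_eq_true, zero_pow,
              mul_zero, zero_mul, add_zero, zero_add, mul_eq_zero, pow_eq_zero_iff] at hF
            tauto
          exact Or.inr (Or.inl ⟨H0, H2, H3⟩)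
        · exfalso
          have H3 : v 3 = 0 := by
            rcases mul_eq_zero.mp q0 with h | h
            · rcases mul_eq_zero.mp h with h' | h'
              · exact absurd h' H1
              · exact absurd h' H2
            · exact h
          simp only [H0, H3, ne_eq, OfNat.ofNat_ne_zero, not_false_eq_true, zero_pow,
            mul_zero, zero_mul, add_zero, zero_add, mul_eq_zero, pow_eq_zero_iff] at hF
          tauto
    · by_cases H1 : v 1 = 0
      · by_cases H2 : v 2 = 0
        · have H3 : v 3 = 0 := by
            simp only [H1, H2, ne_eq, OfNat.ofNat_ne_zero, not_false_eq_true, zero_pow,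
              mul_zero, zero_mul, add_zero, zero_add, mul_eq_zero, pow_eq_zero_iff] at hF
            tauto
          exact Or.inl ⟨H1, H2, H3⟩
        · exfalso
          have H3 : v 3 = 0 := by
            rcases mul_eq_zero.mp q1 with h | h
            · rcases mul_eq_zero.mp h with h' | h'
              · exact absurd h' H0
              · exact absurd h' H2
            · exact h
          simp only [H1, H3, ne_eq, OfNat.ofNat_ne_zero, not_false_eq_true, zero_pow,
            mul_zero, zero_mul, add_zero, zero_add, mul_eq_zero, pow_eq_zero_iff] at hF
          tauto
      · by_cases H2 : v 2 = 0
        · exfalso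
          have H3 : v 3 = 0 := by
            rcases mul_eq_zero.mp q2 with h | h
            · rcases mul_eq_zero.mp h with h' | h'
              · exact absurd h' H0
              · exact absurd h' H1
            · exact h
          simp only [H2, H3, ne_eq, OfNat.ofNat_ne_zero, not_false_eq_true, zero_pow,
            mul_zero, zero_mul, add_zero, zero_add, mul_eq_zero, pow_eq_zero_iff] at hF
          tauto
        · exfalso
          rcases mul_eq_zero.mp q3 with h | h
          · rcases mul_eq_zero.mp h with h' | h'
            · exact absurd h' H0
            · exact absurd h' H1
          · exact absurd h H2
  · rintro (⟨h1, h2, h3⟩ | ⟨h0, h2, h3⟩ | ⟨h0, h1, h3⟩ | ⟨h0, h1, h2⟩) <;>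
      refine ⟨by rw [FaP_eval]; simp [*], fun i => ?_⟩ <;>
      fin_cases i <;> simp only [Fin.isValue, hp0, hp1, hp2, hp3] <;> simp [*]

/-- the ordinary Kummer quartic surface has exactly the four
coordinate points as singular points, and its four coordinate hyperplane
sections are double conics (tropes). -/
theorem stmt_10 (k : Type*) [Field k] [IsAlgClosed k] [CharP k 2]
    (a1 a2 a3 c1 c2 c3 d1 d2 d3 : k)
    (h12 : a1 ≠ a2) (h13 : a1 ≠ a3) (h23 : a2 ≠ a3)
    (hc1 : c1 ≠ 0) (hc2 : c2 ≠ 0) (hc3 : c3 ≠ 0)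
    (hd1 : d1 ≠ 0) (hd2 : d2 ≠ 0) (hd3 : d3 ≠ 0)
    (e1 e2 e3 f1 f2 f3 : k)
    (he1 : e1 ^ 2 = d1) (he2 : e2 ^ 2 = d2) (he3 : e3 ^ 2 = d3)
    (hf1 : f1 ^ 2 = c1) (hf2 : f2 ^ 2 = c2) (hf3 : f3 ^ 2 = c3) :
    (∀ v : Fin 4 → k, v ≠ 0 →
      ((eval v (FaP k a1 a2 a3 c1 c2 c3 d1 d2 d3) = 0 ∧
          ∀ i : Fin 4, eval v (pderiv i (FaP k a1 a2 a3 c1 c2 c3 d1 d2 d3)) = 0)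
        ↔ ((v 1 = 0 ∧ v 2 = 0 ∧ v 3 = 0) ∨ (v 0 = 0 ∧ v 2 = 0 ∧ v 3 = 0) ∨
           (v 0 = 0 ∧ v 1 = 0 ∧ v 3 = 0) ∨ (v 0 = 0 ∧ v 1 = 0 ∧ v 2 = 0)))) ∧
    (∀ y z t : k,
      eval ![0, y, z, t] (FaP k a1 a2 a3 c1 c2 c3 d1 d2 d3)
        = ((a1+a2)*e3*z*t + (a1+a3)*e2*y*t + (a2+a3)*e1*y*z) ^ 2) ∧
    (∀ x z t : k,
      eval ![x, 0, z, t] (FaP k a1 a2 a3 c1 c2 c3 d1 d2 d3)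
        = ((a1+a2)*e3*z*t + (a1+a3)*f2*x*z + (a2+a3)*f1*x*t) ^ 2) ∧
    (∀ x y t : k,
      eval ![x, y, 0, t] (FaP k a1 a2 a3 c1 c2 c3 d1 d2 d3)
        = ((a1+a2)*f3*x*y + (a1+a3)*e2*y*t + (a2+a3)*f1*x*t) ^ 2) ∧
    (∀ x y z : k,
      eval ![x, y, z, 0] (FaP k a1 a2 a3 c1 c2 c3 d1 d2 d3)
        = ((a1+a2)*f3*x*y + (a1+a3)*f2*x*z + (a2+a3)*e1*y*z) ^ 2) := by
  have h2k : (2:k) = 0 := by exact_mod_cast CharP.cast_eq_zero k 2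
  have sq3 : ∀ a b c : k, (a+b+c)^2 = a^2+b^2+c^2 := by
    intro a b c; linear_combination (a*b+a*c+b*c)*h2k
  subst he1 he2 he3 hf1 hf2 hf3
  refine ⟨fun v hv => FaP_sing k a1 a2 a3 (f1^2) (f2^2) (f3^2) (e1^2) (e2^2) (e3^2) h12 h13 h23
      hc1 hc2 hc3 hd1 hd2 hd3 v hv, ?_, ?_, ?_, ?_⟩
  · intro y z t; rw [FaP_eval, sq3]; simp; ring
  · intro x z t; rw [FaP_eval, sq3]; simp; ring
  · intro x y t; rw [FaP_eval, sq3]; simp; ring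
  · intro x y z; rw [FaP_eval, sq3]; simp; ring
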